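/- Let p_1,...,p_n ≥ 0 with ∑ p_i = 1, and for k = 1,...,m let (r_{k,1},...,r_{k,n}) be probability distributions on {1,...,n} satisfying ∑_{k=1}^m r_{k,i} = m p_i for all i. For gradients g_1,...,g_n ∈ ℝ^d with g = ∑_i p_i g_i and g_{W_k} = ∑_i r_{k,i} g_i, one has (1/m²)∑_{k=1}^m ∑_{i=1}^n r_{k,i} ‖g_i − g_{W_k}‖² = (1/m²)( m ∑_i p_i ‖g_i‖² − ∑_{k=1}^m ‖g_{W_k}‖² ) ≤ (1/m)( ∑_i p_i ‖g_i‖² − ‖g‖² ). -/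

import Mathlib

open Finset

/-- Key identity and comparison: the clustered-sampling variance term equals
`(1/m²)(m ∑ p_i‖g_i‖² − ∑_k ‖g_{W_k}‖²)` and is at most the MD term
`(1/m)(∑ p_i‖g_i‖² − ‖g‖²)`. -/
theorem clustered_var_le_md (n m d : ℕ) (hm : 0 < m)
    (p : Fin n → ℝ) (hp0 : ∀ i, 0 ≤ p i) (hp1 : ∑ i, p i = 1)
    (r : Fin m → Fin n → ℝ)
    (hr0 : ∀ k i, 0 ≤ r k i) (hr1 : ∀ k, ∑ i, r k i = 1)
    (hunb : ∀ i, ∑ k, r k i = m * p i)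
    (g : Fin n → EuclideanSpace ℝ (Fin d))
    (gbar : EuclideanSpace ℝ (Fin d)) (hgbar : gbar = ∑ i, p i • g i)
    (gW : Fin m → EuclideanSpace ℝ (Fin d)) (hgW : ∀ k, gW k = ∑ i, r k i • g i) :
    ((1 / (m : ℝ) ^ 2) * ∑ k, ∑ i, r k i * ‖g i - gW k‖ ^ 2 =
        (1 / (m : ℝ) ^ 2) * ((m : ℝ) * (∑ i, p i * ‖g i‖ ^ 2) - ∑ k, ‖gW k‖ ^ 2)) ∧
      (1 / (m : ℝ) ^ 2) * ∑ k, ∑ i, r k i * ‖g i - gW k‖ ^ 2 ≤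
        (1 / (m : ℝ)) * ((∑ i, p i * ‖g i‖ ^ 2) - ‖gbar‖ ^ 2) := by
  have hm' : (0:ℝ) < m := by exact_mod_cast hm
  -- inner sum identity
  have hinner : ∀ k, ∑ i, r k i * ‖g i - gW k‖ ^ 2
      = (∑ i, r k i * ‖g i‖ ^ 2) - ‖gW k‖ ^ 2 := by
    intro k
    have expand : ∀ i, r k i * ‖g i - gW k‖ ^ 2
        = r k i * ‖g i‖ ^ 2 - 2 * (r k i * inner ℝ (g i) (gW k)) + r k i * ‖gW k‖ ^ 2 := by
      intro i
      have := @norm_sub_sq_real (EuclideanSpace ℝ (Fin d)) _ _ (g i) (gW k)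
      rw [this]; ring
    rw [Finset.sum_congr rfl fun i _ => expand i]
    rw [Finset.sum_add_distrib, Finset.sum_sub_distrib, ← Finset.mul_sum,
      ← Finset.sum_mul, hr1 k, one_mul]
    have h2 : ∑ i, r k i * inner ℝ (g i) (gW k) = (‖gW k‖:ℝ) ^ 2 := by
      have : (inner ℝ (gW k) (gW k) : ℝ) = ‖gW k‖ ^ 2 := real_inner_self_eq_norm_sq _
      rw [← this, hgW k, sum_inner]
      exact Finset.sum_congr rfl fun i _ => (real_inner_smul_left _ _ _).symm
    rw [h2]; ring
  have hsum : ∑ k, ∑ i, r k i * ‖g i - gW k‖ ^ 2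
      = (m : ℝ) * (∑ i, p i * ‖g i‖ ^ 2) - ∑ k, ‖gW k‖ ^ 2 := by
    rw [Finset.sum_congr rfl fun k _ => hinner k, Finset.sum_sub_distrib]
    congr 1
    rw [Finset.sum_comm, Finset.mul_sum]
    refine Finset.sum_congr rfl fun i _ => ?_
    rw [← Finset.sum_mul, hunb i]; ring
  refine ⟨by rw [hsum], ?_⟩
  rw [hsum]
  -- Jensen: m² ‖gbar‖² ≤ m ∑ ‖gW k‖²
  have hmean : ∑ k, gW k = (m:ℝ) • gbar := by
    rw [hgbar, Finset.sum_congr rfl fun k _ => hgW k, Finset.sum_comm, Finset.smul_sum]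
    refine Finset.sum_congr rfl fun i _ => ?_
    rw [← Finset.sum_smul, hunb i, mul_smul]
  have hjensen : (m:ℝ)^2 * ‖gbar‖ ^ 2 ≤ (m:ℝ) * ∑ k, ‖gW k‖ ^ 2 := by
    have h1 : (∑ k, ‖gW k‖) ^ 2 ≤ (Finset.univ : Finset (Fin m)).card * ∑ k, ‖gW k‖ ^ 2 :=
      sq_sum_le_card_mul_sum_sq
    have h2 : ‖∑ k, gW k‖ ≤ ∑ k, ‖gW k‖ := norm_sum_le _ _
    have h3 : ‖∑ k, gW k‖ = (m:ℝ) * ‖gbar‖ := by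
      rw [hmean, norm_smul]; simp [abs_of_pos hm']
    calc (m:ℝ)^2 * ‖gbar‖ ^ 2 = ((m:ℝ) * ‖gbar‖) ^ 2 := by ring
      _ = ‖∑ k, gW k‖ ^ 2 := by rw [h3]
      _ ≤ (∑ k, ‖gW k‖) ^ 2 := by
          exact pow_le_pow_left₀ (norm_nonneg _) h2 2
      _ ≤ (m:ℝ) * ∑ k, ‖gW k‖ ^ 2 := by simpa using h1
  rw [div_mul_eq_mul_div, div_mul_eq_mul_div, one_mul, one_mul,
    div_le_div_iff₀ (by positivity) hm']
  nlinarith [hjensen]
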